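/- Let n > 2. The complete bipartite graph K_{2,n−2} has at least binom(n−2, ⌈(n−3)/2⌉) distinct globally minimal defensive alliances. -/
import Mathlib


/-- `degIn G X v` is the number of neighbors of `v` lying in the set `X`
(denoted `deg_X(v)` in the paper). -/
noncomputable def degIn {V : Type*} (G : SimpleGraph V) (X : Set V) (v : V) : ℕ :=
  {u | u ∈ X ∧ G.Adj v u}.ncard

/-- `A` is a defensive alliance of `G`: every `v ∈ A` satisfies
`deg_A(v) + 1 ≥ deg_{V∖A}(v)`. -/
def IsDefensiveAlliance {V : Type*} (G : SimpleGraph V) (A : Set V) : Prop :=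
  ∀ v ∈ A, degIn G A v + 1 ≥ degIn G Aᶜ v

/-- A nonempty defensive alliance is globally minimal if no nonempty proper
subset is a defensive alliance. -/
def IsGloballyMinimalDA {V : Type*} (G : SimpleGraph V) (A : Set V) : Prop :=
  A.Nonempty ∧ IsDefensiveAlliance G A ∧
    ∀ B : Set V, B ⊂ A → B.Nonempty → ¬ IsDefensiveAlliance G B

/-- A nonempty defensive alliance is locally minimal if for every `v ∈ A`,
the set `A ∖ {v}` is not a nonempty defensive alliance. -/
def IsLocallyMinimalDA {V : Type*} (G : SimpleGraph V) (A : Set V) : Prop :=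
  A.Nonempty ∧ IsDefensiveAlliance G A ∧
    ∀ v ∈ A, ¬ ((A \ {v}).Nonempty ∧ IsDefensiveAlliance G (A \ {v}))

open Sum Set

lemma degIn_inl (m : ℕ) (B : Set (Fin 2 ⊕ Fin m)) (w : Fin 2) :
    degIn (completeBipartiteGraph (Fin 2) (Fin m)) B (Sum.inl w) =
      (B ∩ Set.range Sum.inr).ncard := by
  unfold degIn; congr 1; ext u; cases u <;> simp

lemma degIn_inr (m : ℕ) (B : Set (Fin 2 ⊕ Fin m)) (i : Fin m) :
    degIn (completeBipartiteGraph (Fin 2) (Fin m)) B (Sum.inr i) =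
      (B ∩ Set.range Sum.inl).ncard := by
  unfold degIn; congr 1; ext u; cases u <;> simp

lemma ncard_range_inr (m : ℕ) : (Set.range (Sum.inr : Fin m → Fin 2 ⊕ Fin m)).ncard = m := by
  rw [Set.ncard_eq_toFinset_card', toFinset_range,
    Finset.card_image_of_injective _ Sum.inr_injective]
  simp

lemma ncard_range_inl (m : ℕ) : (Set.range (Sum.inl : Fin 2 → Fin 2 ⊕ Fin m)).ncard = 2 := by
  rw [Set.ncard_eq_toFinset_card', toFinset_range,
    Finset.card_image_of_injective _ Sum.inl_injective]
  simp

lemma compl_inter_range {α : Type*} [Fintype α] (B R : Set α) :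
    (Bᶜ ∩ R).ncard = R.ncard - (B ∩ R).ncard := by
  rw [← Set.ncard_diff (Set.inter_subset_right (s := B)) (B ∩ R).toFinite]
  congr 1
  ext x
  simp only [Set.mem_inter_iff, Set.mem_compl_iff, Set.mem_diff]
  tauto

lemma gmda_insert (m : ℕ) (S : Finset (Fin m)) (hS : S.card = m / 2) :
    IsGloballyMinimalDA (completeBipartiteGraph (Fin 2) (Fin m))
      (insert (Sum.inl 0) (Sum.inr '' ↑S)) := by
  set A : Set (Fin 2 ⊕ Fin m) := insert (Sum.inl 0) (Sum.inr '' ↑S) with hA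
  have hAr : A ∩ Set.range Sum.inr = Sum.inr '' ↑S := by
    ext u
    cases u with
    | inl w => simp [hA]
    | inr i => simp [hA]
  have hAl : A ∩ Set.range Sum.inl = {Sum.inl 0} := by
    ext u
    cases u with
    | inl w => simp [hA]
    | inr i => simp [hA]
  have hArc : (Aᶜ ∩ Set.range Sum.inr).ncard = m - m / 2 := by
    rw [compl_inter_range, hAr, ncard_range_inr,
      Set.ncard_image_of_injective _ Sum.inr_injective, Set.ncard_coe_finset, hS]
  have hAlc : (Aᶜ ∩ Set.range Sum.inl).ncard = 1 := by
    rw [compl_inter_range, hAl, ncard_range_inl]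
    simp
  have hArcard : (A ∩ Set.range Sum.inr).ncard = m / 2 := by
    rw [hAr, Set.ncard_image_of_injective _ Sum.inr_injective, Set.ncard_coe_finset, hS]
  refine ⟨⟨Sum.inl 0, Set.mem_insert _ _⟩, ?_, ?_⟩
  · intro v hv
    cases v with
    | inl w =>
      have hw : w = 0 := by
        have : Sum.inl w ∈ A ∩ Set.range Sum.inl := ⟨hv, ⟨w, rfl⟩⟩
        rw [hAl] at this
        simpa using this
      subst hw
      rw [degIn_inl, degIn_inl, hArcard, hArc]
      omega
    | inr i =>
      rw [degIn_inr, degIn_inr, hAl, hAlc]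
      simp
  · intro B hB hBne hBDA
    by_cases h0 : Sum.inl 0 ∈ B
    · -- B contains inl 0, missing some inr j
      obtain ⟨x, hxA, hxB⟩ := Set.exists_of_ssubset hB
      have hBr : B ∩ Set.range Sum.inr ⊂ A ∩ Set.range Sum.inr := by
        constructor
        · exact Set.inter_subset_inter_left _ hB.subset
        · intro hsub
          cases x with
          | inl w =>
            have : Sum.inl w ∈ A ∩ Set.range Sum.inl := ⟨hxA, ⟨w, rfl⟩⟩
            rw [hAl] at this
            simp only [Set.mem_singleton_iff, Sum.inl.injEq] at this
            exact hxB (this ▸ h0)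
          | inr j =>
            have : Sum.inr j ∈ B ∩ Set.range Sum.inr := hsub ⟨hxA, ⟨j, rfl⟩⟩
            exact hxB this.1
      have ht : (B ∩ Set.range Sum.inr).ncard < m / 2 := by
        rw [← hArcard]
        exact Set.ncard_lt_ncard hBr (A ∩ Set.range Sum.inr).toFinite
      have := hBDA (Sum.inl 0) h0
      rw [degIn_inl, degIn_inl, compl_inter_range, ncard_range_inr] at this
      omega
    · -- B misses inl 0; contains some inr i
      obtain ⟨x, hxB⟩ := hBne
      have hBl : B ∩ Set.range Sum.inl = ∅ := by
        have hsub : B ∩ Set.range Sum.inl ⊆ {Sum.inl 0} := by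
          rw [← hAl]; exact Set.inter_subset_inter_left _ hB.subset
        ext u
        simp only [Set.mem_empty_iff_false, iff_false]
        intro hu
        have := hsub hu
        simp only [Set.mem_singleton_iff] at this
        exact h0 (this ▸ hu.1)
      obtain ⟨i, hi⟩ : ∃ i, Sum.inr i ∈ B := by
        cases x with
        | inl w =>
          exact absurd (show Sum.inl w ∈ B ∩ Set.range Sum.inl from ⟨hxB, ⟨w, rfl⟩⟩)
            (by rw [hBl]; simp)
        | inr i => exact ⟨i, hxB⟩
      have := hBDA (Sum.inr i) hi
      rw [degIn_inr, degIn_inr, hBl, compl_inter_range, hBl, ncard_range_inl] at this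
      simp at this

/-- For `n > 2`, the complete bipartite graph `K_{2,n-2}` has at
least `binom(n-2, ⌈(n-3)/2⌉)` distinct globally minimal defensive alliances. -/
theorem le_card_globallyMinimalDA_completeBipartite (n : ℕ) (hn : 2 < n) :
    Nat.choose (n - 2) ((n - 3 + 1) / 2) ≤
      Nat.card {A : Set (Fin 2 ⊕ Fin (n - 2)) //
        IsGloballyMinimalDA (completeBipartiteGraph (Fin 2) (Fin (n - 2))) A} := by
  have hk : n - 3 + 1 = n - 2 := by omega
  rw [hk]
  set m := n - 2 with hm
  let f : {S : Finset (Fin m) // S.card = m / 2} →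
      {A : Set (Fin 2 ⊕ Fin m) //
        IsGloballyMinimalDA (completeBipartiteGraph (Fin 2) (Fin m)) A} :=
    fun S => ⟨insert (Sum.inl 0) (Sum.inr '' ↑S.1), gmda_insert m S.1 S.2⟩
  have hf : Function.Injective f := by
    rintro ⟨S, hS⟩ ⟨T, hT⟩ h
    have h' : insert (Sum.inl (0:Fin 2)) (Sum.inr '' (↑S : Set (Fin m))) =
        insert (Sum.inl 0) (Sum.inr '' (↑T : Set (Fin m))) := congrArg Subtype.val h
    simp only [Subtype.mk.injEq]
    ext i
    have hS' : i ∈ S ↔ Sum.inr i ∈ insert (Sum.inl (0 : Fin 2)) (Sum.inr '' (↑S : Set (Fin m))) := by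
      simp
    have hT' : i ∈ T ↔ Sum.inr i ∈ insert (Sum.inl (0 : Fin 2)) (Sum.inr '' (↑T : Set (Fin m))) := by
      simp
    rw [hS', hT', h']
  calc Nat.choose m (m / 2) = Nat.card {S : Finset (Fin m) // S.card = m / 2} := by
        rw [Nat.card_eq_fintype_card, Fintype.card_finset_len, Fintype.card_fin]
    _ ≤ _ := Nat.card_le_card_of_injective f hf
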